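/- If G is a connected graph on n vertices with minimum degree δ, then G has a connected 2-step dominating set of size at most 5n/(δ+1) - 4. -/

import Mathlib

open SimpleGraph

/-- `D` is a 2-step dominating set of `G`: every vertex is within distance 2 of `D`. -/
def TwoStepDominating {V : Type*} (G : SimpleGraph V) (D : Set V) : Prop :=
  ∀ v : V, ∃ u ∈ D, ∃ p : G.Walk u v, p.length ≤ 2

theorem stmt5 {V : Type*} [Fintype V] (G : SimpleGraph V) (hG : G.Connected)
    (n δ : ℕ) (hn : Fintype.card V = n)
    (hδ : ∀ v : V, δ ≤ (G.neighborSet v).ncard) :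
    ∃ D : Finset V, TwoStepDominating G ↑D ∧
      (G.induce (↑D : Set V)).Connected ∧
      ((D.card : ℝ) ≤ 5 * (n : ℝ) / (δ + 1) - 4) := by
  classical
  haveI : Nonempty V := hG.nonempty
  obtain ⟨v₀⟩ := ‹Nonempty V›
  -- the collection of "good" sets
  set Q : Set (Finset V) := {S | S.Nonempty ∧
      (∀ s ∈ S, ∀ t ∈ S, s ≠ t → 3 ≤ G.dist s t) ∧
      ∃ H : G.Subgraph, H.Connected ∧ (↑S : Set V) ⊆ H.verts ∧
        H.verts.ncard + 4 ≤ 5 * S.card} with hQdef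
  have hQ0 : ({v₀} : Finset V) ∈ Q := by
    refine ⟨Finset.singleton_nonempty _, ?_, G.singletonSubgraph v₀,
      Subgraph.singletonSubgraph_connected, ?_, ?_⟩
    · intro s hs t ht hst
      simp only [Finset.mem_singleton] at hs ht
      exact absurd (hs.trans ht.symm) hst
    · simp
    · simp
  obtain ⟨S, hSQ, hSmax⟩ := Set.Finite.exists_maximalFor
    (fun S : Finset V => S.card) Q (Set.toFinite Q) ⟨_, hQ0⟩
  obtain ⟨hSne, hpack, H, hHconn, hSsub, hHcard⟩ := hSQ
  -- key claim: every vertex reachable by a walk from S is within distance 2 of S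
  have key : ∀ k : ℕ, ∀ v s : V, s ∈ S → ∀ p : G.Walk s v, p.length ≤ k →
      ∃ t ∈ S, G.dist t v ≤ 2 := by
    intro k
    induction k with
    | zero =>
      intro v s hs p hp
      exact ⟨s, hs, le_trans (G.dist_le p) (le_trans hp (by norm_num))⟩
    | succ k ih =>
      intro v s hs p hp
      by_cases hex : ∃ t ∈ S, G.dist t v ≤ 2
      · exact hex
      exfalso
      push_neg at hex
      have hfar : ∀ t ∈ S, 3 ≤ G.dist t v := fun t ht => hex t ht
      have hlen : 3 ≤ p.length := le_trans (hfar s hs) (G.dist_le p)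
      have hnn : ¬ p.reverse.Nil := by
        rw [SimpleGraph.Walk.not_nil_iff_lt_length, SimpleGraph.Walk.length_reverse]
        omega
      rw [SimpleGraph.Walk.not_nil_iff] at hnn
      obtain ⟨u, hadj, q, hq⟩ := hnn
      have hql : q.length + 1 = p.length := by
        have := congrArg SimpleGraph.Walk.length hq
        simp only [SimpleGraph.Walk.length_reverse, SimpleGraph.Walk.length_cons] at this
        omega
      obtain ⟨t, ht, htu⟩ := ih u s hs q.reverse
        (by rw [SimpleGraph.Walk.length_reverse]; omega)
      have hdist3 : G.dist t v = 3 := by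
        have h1 : G.dist u v ≤ 1 :=
          le_trans (G.dist_le (SimpleGraph.Walk.cons hadj.symm SimpleGraph.Walk.nil)) (by norm_num)
        have := hG.dist_triangle (u := t) (v := u) (w := v)
        have := hfar t ht
        omega
      -- extend S by v, contradicting maximality
      have hvS : v ∉ S := by
        intro hv
        have := hfar v hv
        simp [G.dist_self] at this
      obtain ⟨q3, hq3⟩ := (hG t v).exists_walk_length_eq_dist
      have hq3len : q3.length = 3 := by rw [hq3, hdist3]
      have hS' : insert v S ∈ Q := by
        refine ⟨Finset.insert_nonempty _ _, ?_, H ⊔ q3.toSubgraph, ?_, ?_, ?_⟩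
        · intro a ha b hb hab
          rcases Finset.mem_insert.mp ha with ha' | ha'
          · rcases Finset.mem_insert.mp hb with hb' | hb'
            · exact absurd (ha'.trans hb'.symm) hab
            · subst ha'; rw [G.dist_comm]; exact hfar b hb'
          · rcases Finset.mem_insert.mp hb with hb' | hb'
            · subst hb'; exact hfar a ha'
            · exact hpack a ha' b hb' hab
        · refine Subgraph.connected_sup hHconn.preconnected q3.toSubgraph_connected.preconnected ⟨t, ?_⟩
          exact ⟨hSsub (Finset.mem_coe.mpr ht), q3.start_mem_verts_toSubgraph⟩
        · intro x hx
          rcases Finset.mem_insert.mp (Finset.mem_coe.mp hx) with rfl | h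
          · exact Or.inr q3.end_mem_verts_toSubgraph
          · exact Or.inl (hSsub (Finset.mem_coe.mpr h))
        · have hsup : (H ⊔ q3.toSubgraph).verts.ncard ≤ H.verts.ncard + 4 := by
            rw [Subgraph.verts_sup]
            refine le_trans (Set.ncard_union_le _ _) ?_
            have h1 : q3.toSubgraph.verts.ncard ≤ 4 := by
              rw [SimpleGraph.Walk.verts_toSubgraph]
              have : {w | w ∈ q3.support} = (↑q3.support.toFinset : Set V) := by
                ext w; simp
              rw [this, Set.ncard_coe_finset]
              calc q3.support.toFinset.card ≤ q3.support.length := List.toFinset_card_le _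
                _ = q3.length + 1 := SimpleGraph.Walk.length_support _
                _ = 4 := by omega
            omega
          rw [Finset.card_insert_of_notMem hvS]
          omega
      have hcard : S.card ≤ (insert v S).card := by
        rw [Finset.card_insert_of_notMem hvS]; omega
      have : (insert v S).card ≤ S.card := hSmax hS' hcard
      rw [Finset.card_insert_of_notMem hvS] at this
      omega
  -- S 2-step dominates
  have hdom : ∀ v : V, ∃ t ∈ S, G.dist t v ≤ 2 := by
    intro v
    obtain ⟨s, hs⟩ := hSne
    obtain ⟨p⟩ := hG s v
    exact key p.length v s hs p le_rfl
  -- counting: |S| * (δ+1) ≤ n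
  have hcount : S.card * (δ + 1) ≤ n := by
    set f : V → Finset V := fun s => insert s (G.neighborFinset s) with hf
    have hdisj : (↑S : Set V).PairwiseDisjoint f := by
      intro a ha b hb hab
      simp only [Function.onFun]
      rw [Finset.disjoint_left]
      intro x hxa hxb
      have hda : G.dist a x ≤ 1 := by
        rcases Finset.mem_insert.mp hxa with rfl | h
        · rw [SimpleGraph.dist_self]; omega
        · exact le_of_eq ((G.dist_eq_one_iff_adj).mpr ((G.mem_neighborFinset _ _).mp h))
      have hdb : G.dist x b ≤ 1 := by
        rcases Finset.mem_insert.mp hxb with rfl | h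
        · rw [SimpleGraph.dist_self]; omega
        · exact le_of_eq ((G.dist_eq_one_iff_adj).mpr
            (((G.mem_neighborFinset _ _).mp h).symm))
      have htri := hG.dist_triangle (u := a) (v := x) (w := b)
      have := hpack a ha b hb hab
      omega
    have hcards : ∀ s : V, δ + 1 ≤ (f s).card := by
      intro s
      rw [hf]
      rw [Finset.card_insert_of_notMem (G.notMem_neighborFinset_self s)]
      have : (G.neighborSet s).ncard = (G.neighborFinset s).card := by
        rw [neighborFinset_def, Set.ncard_eq_toFinset_card']
      have := hδ s
      omega
    calc S.card * (δ + 1) = ∑ _s ∈ S, (δ + 1) := by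
          rw [Finset.sum_const, smul_eq_mul, mul_comm]
      _ ≤ ∑ s ∈ S, (f s).card := Finset.sum_le_sum fun s _ => hcards s
      _ = (S.biUnion f).card := (Finset.card_biUnion (fun a ha b hb hab =>
            hdisj ha hb hab)).symm
      _ ≤ Fintype.card V := Finset.card_le_univ _
      _ = n := hn
  -- assemble
  refine ⟨H.verts.toFinset, ?_, ?_, ?_⟩
  · intro v
    obtain ⟨t, ht, htv⟩ := hdom v
    obtain ⟨p, hp⟩ := (hG t v).exists_walk_length_eq_dist
    exact ⟨t, by simpa using hSsub (Finset.mem_coe.mpr ht), p, by omega⟩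
  · have := hHconn.induce_verts
    have hcoe : (↑(H.verts.toFinset) : Set V) = H.verts := Set.coe_toFinset _
    rw [hcoe]
    exact this
  · have hDcard : H.verts.toFinset.card = H.verts.ncard := by
      rw [Set.ncard_eq_toFinset_card']
    have hp : (0 : ℝ) < (δ : ℝ) + 1 := by positivity
    have h1 : (H.verts.toFinset.card : ℝ) + 4 ≤ 5 * S.card := by
      rw [hDcard]
      exact_mod_cast hHcard
    have h2 : (S.card : ℝ) * ((δ : ℝ) + 1) ≤ n := by exact_mod_cast hcount
    have h3 : (S.card : ℝ) ≤ (n : ℝ) / ((δ : ℝ) + 1) := by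
      rw [le_div_iff₀ hp]; exact h2
    have h4 : 5 * (S.card : ℝ) ≤ 5 * (n : ℝ) / ((δ : ℝ) + 1) := by
      rw [mul_div_assoc]; linarith
    linarith
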